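/- Let γ : ℝ → ℝ² be a smooth closed unit-speed self-shrinking curve with period ℓ. Then ∫₀^ℓ [ ( |γ(t)|²/4 − 1/2 )² − 1/2 ] e^{−|γ(t)|²/4} dt = − ∫₀^ℓ H(t)² e^{−|γ(t)|²/4} dt. -/

import Mathlib

noncomputable section
open Real MeasureTheory
open scoped RealInnerProductSpace

abbrev E2 := EuclideanSpace ℝ (Fin 2)

/-- The unit normal of a unit-speed plane curve: `γ′` rotated by `−π/2`. -/
def normal (γ : ℝ → E2) (t : ℝ) : E2 := WithLp.toLp 2 ![deriv γ t 1, -(deriv γ t 0)]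

/-- The curvature `H = −⟨γ″, n⟩` of a unit-speed plane curve. -/
def curv (γ : ℝ → E2) (t : ℝ) : ℝ := -⟪deriv (deriv γ) t, normal γ t⟫

lemma inner_E2 (x y : E2) : ⟪x, y⟫ = x 0 * y 0 + x 1 * y 1 := by
  simp [PiLp.inner_apply, Fin.sum_univ_two, RCLike.inner_apply]
  ring

/-- On a smooth closed unit-speed self-shrinking curve,
`∫₀^ℓ [(|γ|²/4 − 1/2)² − 1/2] e^{−|γ|²/4} = −∫₀^ℓ H² e^{−|γ|²/4}`. -/
theorem stmt6 (γ : ℝ → E2) (hγ : ContDiff ℝ (⊤ : ℕ∞) γ)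
    (hunit : ∀ t, ‖deriv γ t‖ = 1)
    (ℓ : ℝ) (hℓ : 0 < ℓ) (hper : ∀ t, γ (t + ℓ) = γ t)
    (hshrink : ∀ t, curv γ t = ⟪γ t, normal γ t⟫ / 2) :
    ∫ t in (0:ℝ)..ℓ, ((‖γ t‖ ^ 2 / 4 - 1/2) ^ 2 - 1/2) * Real.exp (-‖γ t‖ ^ 2 / 4)
      = -∫ t in (0:ℝ)..ℓ, curv γ t ^ 2 * Real.exp (-‖γ t‖ ^ 2 / 4) := by
  have hd1 : Differentiable ℝ γ := hγ.differentiable (by simp)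
  have hc1 : ContDiff ℝ (⊤ : ℕ∞) (deriv γ) := (contDiff_infty_iff_deriv.mp hγ).2
  have hd2 : Differentiable ℝ (deriv γ) := hc1.differentiable (by simp)
  have hcont0 : Continuous γ := hγ.continuous
  have hcont1 : Continuous (deriv γ) := hc1.continuous
  have hcont2 : Continuous (deriv (deriv γ)) := (contDiff_infty_iff_deriv.mp hc1).2.continuous
  have h1 : ∀ t, HasDerivAt γ (deriv γ t) t := fun t => (hd1 t).hasDerivAt
  have h2 : ∀ t, HasDerivAt (deriv γ) (deriv (deriv γ) t) t := fun t => (hd2 t).hasDerivAt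
  -- periodicity of the derivative
  have hper' : ∀ t, deriv γ (t + ℓ) = deriv γ t := by
    intro t
    have hγeq : (fun s => γ (s + ℓ)) = γ := funext hper
    calc deriv γ (t + ℓ) = deriv (fun s => γ (s + ℓ)) t := (deriv_comp_add_const γ ℓ t).symm
      _ = deriv γ t := by rw [hγeq]
  -- basic identities
  have hA : ∀ t, ⟪deriv γ t, deriv γ t⟫ = 1 := fun t => by
    rw [real_inner_self_eq_norm_sq, hunit]; norm_num
  have hB : ∀ t, ⟪deriv γ t, deriv (deriv γ) t⟫ = 0 := by
    intro t
    have hc : HasDerivAt (fun s => ⟪deriv γ s, deriv γ s⟫)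
        (⟪deriv γ t, deriv (deriv γ) t⟫ + ⟪deriv (deriv γ) t, deriv γ t⟫) t :=
      (h2 t).inner ℝ (h2 t)
    rw [show (fun s => ⟪deriv γ s, deriv γ s⟫) = (fun _ : ℝ => (1:ℝ)) from funext hA] at hc
    have h0 := hc.unique (hasDerivAt_const t 1)
    rw [real_inner_comm]
    rw [real_inner_comm (deriv (deriv γ) t)] at h0
    linarith
  -- ⟨γ, γ''⟩ = -2 H²
  have hC : ∀ t, ⟪γ t, deriv (deriv γ) t⟫ = -2 * curv γ t ^ 2 := by
    intro t
    have hB' := hB t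
    have hA' := hA t
    have hs := hshrink t
    simp only [curv, normal, inner_E2, Matrix.cons_val_zero, Matrix.cons_val_one,
      Matrix.head_cons] at hB' hA' hs ⊢
    set x := γ t 0; set y := γ t 1
    set a := deriv γ t 0; set b := deriv γ t 1
    set p := deriv (deriv γ) t 0; set q := deriv (deriv γ) t 1
    linear_combination (x*a + y*b) * hB' - (x*p + y*q) * hA'
      + 2 * (-(p*b + q*(-a))) * hs
  -- |γ|² = ⟨γ,γ'⟩² + 4H²
  have hD : ∀ t, ‖γ t‖ ^ 2 = ⟪γ t, deriv γ t⟫ ^ 2 + 4 * curv γ t ^ 2 := by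
    intro t
    rw [← real_inner_self_eq_norm_sq]
    have hA' := hA t
    have hs := hshrink t
    simp only [curv, normal, inner_E2, Matrix.cons_val_zero, Matrix.cons_val_one,
      Matrix.head_cons] at hA' hs ⊢
    set x := γ t 0; set y := γ t 1
    set a := deriv γ t 0; set b := deriv γ t 1
    set p := deriv (deriv γ) t 0; set q := deriv (deriv γ) t 1
    linear_combination (-(x*x + y*y)) * hA'
      - 2 * (x*b - y*a + 2*(-(p*b + q*(-a)))) * hs
  -- scalar helper functions
  set q : ℝ → ℝ := fun t => ⟪γ t, γ t⟫ with hqdef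
  set a : ℝ → ℝ := fun t => ⟪γ t, deriv γ t⟫ with hadef
  set w : ℝ → ℝ := fun t => ⟪γ t, deriv (deriv γ) t⟫ with hwdef
  have hqnorm : ∀ t, q t = ‖γ t‖ ^ 2 := fun t => real_inner_self_eq_norm_sq _
  set e : ℝ → ℝ := fun t => Real.exp (-q t / 4) with hedef
  set F : ℝ → ℝ := fun t => -(1/2) * ((q t / 4 + 1/2) * (a t * e t)) with hFdef
  set D : ℝ → ℝ := fun t =>
    -(1/2) * ((2 * a t / 4) * (a t * e t)
      + (q t / 4 + 1/2) * ((1 + w t) * e t + a t * (e t * (-(2 * a t) / 4)))) with hDdef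
  -- derivatives
  have hqd : ∀ t, HasDerivAt q (2 * a t) t := by
    intro t
    have := (h1 t).inner ℝ (h1 t)
    rw [real_inner_comm (deriv γ t)] at this
    convert this using 1
    · rfl
    · rfl
    simp only [hadef]
    rw [real_inner_comm]
    ring
  have had : ∀ t, HasDerivAt a (1 + w t) t := by
    intro t
    have := (h1 t).inner ℝ (h2 t)
    rw [hA t] at this
    convert this using 1
    · rfl
    · rfl
    simp only [hwdef]; ring
  have hed : ∀ t, HasDerivAt e (e t * (-(2 * a t) / 4)) t := by
    intro t
    exact (((hqd t).neg).div_const 4).exp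
  have hFd : ∀ t, HasDerivAt F (D t) t := by
    intro t
    exact ((((hqd t).div_const 4).add_const (1/2)).mul ((had t).mul (hed t))).const_mul (-(1/2))
  -- continuity
  have hqc : Continuous q := hcont0.inner hcont0
  have hac : Continuous a := hcont0.inner hcont1
  have hwc : Continuous w := hcont0.inner hcont2
  have hec : Continuous e := Real.continuous_exp.comp ((hqc.neg).div_const 4)
  have hDc : Continuous D := by
    apply Continuous.mul continuous_const
    exact (((continuous_const.mul hac).div_const 4).mul (hac.mul hec)).add
      ((((hqc.div_const 4).add continuous_const)).mul
        (((continuous_const.add hwc).mul hec).add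
          (hac.mul (hec.mul ((continuous_const.mul hac).neg.div_const 4)))))
  -- define G, the rewritten RHS integrand
  set G : ℝ → ℝ := fun t => (-(w t) / 2) * e t with hGdef
  have hGc : Continuous G := ((hwc.neg.div_const 2)).mul hec
  -- pointwise identities
  have hLG : ∀ t, ((‖γ t‖ ^ 2 / 4 - 1/2) ^ 2 - 1/2) * Real.exp (-‖γ t‖ ^ 2 / 4)
      = D t - G t := by
    intro t
    have hq' : (⟪γ t, γ t⟫ : ℝ) = ‖γ t‖ ^ 2 := real_inner_self_eq_norm_sq _
    simp only [hDdef, hGdef, hadef, hwdef, hedef, hqdef, hC t, hq', hD t]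
    ring
  have hRG : ∀ t, curv γ t ^ 2 * Real.exp (-‖γ t‖ ^ 2 / 4) = G t := by
    intro t
    have hq' : (⟪γ t, γ t⟫ : ℝ) = ‖γ t‖ ^ 2 := real_inner_self_eq_norm_sq _
    simp only [hGdef, hwdef, hedef, hqdef, hC t, hq']
    ring
  -- integral computations
  have hIL : (∫ t in (0:ℝ)..ℓ, ((‖γ t‖ ^ 2 / 4 - 1/2) ^ 2 - 1/2) * Real.exp (-‖γ t‖ ^ 2 / 4))
      = (∫ t in (0:ℝ)..ℓ, D t) - ∫ t in (0:ℝ)..ℓ, G t := by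
    rw [← intervalIntegral.integral_sub (hDc.intervalIntegrable 0 ℓ) (hGc.intervalIntegrable 0 ℓ)]
    exact intervalIntegral.integral_congr fun t _ => hLG t
  have hIR : (∫ t in (0:ℝ)..ℓ, curv γ t ^ 2 * Real.exp (-‖γ t‖ ^ 2 / 4))
      = ∫ t in (0:ℝ)..ℓ, G t :=
    intervalIntegral.integral_congr fun t _ => hRG t
  have hID : (∫ t in (0:ℝ)..ℓ, D t) = F ℓ - F 0 :=
    intervalIntegral.integral_eq_sub_of_hasDerivAt (fun t _ => hFd t)
      (hDc.intervalIntegrable 0 ℓ)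
  have hFper : F ℓ = F 0 := by
    have hγℓ : γ ℓ = γ 0 := by have := hper 0; rwa [zero_add] at this
    have hγ'ℓ : deriv γ ℓ = deriv γ 0 := by have := hper' 0; rwa [zero_add] at this
    simp only [hFdef, hedef, hqdef, hadef, hγℓ, hγ'ℓ]
  rw [hIL, hIR, hID, hFper]
  ring
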